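/- Let κ : E → ℝ be a bounded measurable function with essential sup norm at most κ_max, and let k ≥ 1 be an integer. For p, q : ℝ² → ℝ continuously differentiable, set a(p,q) := ∫_E κ ∇p · ∇q dx and a^Π(p,q) := ∫_E κ (Π⁰_{k−1} ∇p) · (Π⁰_{k−1} ∇q) dx. Then a^Π(p,q) − a(p,q) ≤ ℰ_{k−1}(κ ∇p) · ℰ_{k−1}(∇q) + ℰ_{k−1}(κ ∇q) · ℰ_{k−1}(∇p) + κ_max · ℰ_{k−1}(∇p) · ℰ_{k−1}(∇q). -/

import Mathlib

open MeasureTheory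
open scoped RealInnerProductSpace

noncomputable section

abbrev Plane := EuclideanSpace ℝ (Fin 2)

/-- `f` is (the restriction of) a real polynomial function on `ℝ²` of total degree at most `m`. -/
def IsPolyDeg (m : ℕ) (f : Plane → ℝ) : Prop :=
  ∃ P : MvPolynomial (Fin 2) ℝ, P.totalDegree ≤ m ∧ ∀ x, f x = MvPolynomial.eval (fun i => x i) P

/-- `Pf` is the `L²(E)`-orthogonal projection of `f` onto the space of polynomial
functions of total degree `≤ m`: it is such a polynomial and the error is
`L²(E)`-orthogonal to all such polynomials. -/
def IsL2Proj (E : Set Plane) (m : ℕ) (f Pf : Plane → ℝ) : Prop :=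
  IsPolyDeg m Pf ∧ ∀ g : Plane → ℝ, IsPolyDeg m g → ∫ x in E, (f x - Pf x) * g x = 0

/-- Componentwise `L²(E)`-projection for `ℝ²`-valued functions. -/
def IsL2ProjV (E : Set Plane) (m : ℕ) (f Pf : Plane → Plane) : Prop :=
  ∀ i : Fin 2, IsL2Proj E m (fun x => f x i) (fun x => Pf x i)

/-- `ℰ_m(f) = ‖f - Π⁰_m f‖_{L²(E)}` for a scalar function, where `Pf = Π⁰_m f`. -/
def errS (E : Set Plane) (f Pf : Plane → ℝ) : ℝ :=
  Real.sqrt (∫ x in E, (f x - Pf x) ^ 2)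

/-- `ℰ_m(f) = ‖f - Π⁰_m f‖_{L²(E)}` for an `ℝ²`-valued function, where `Pf = Π⁰_m f`. -/
def errV (E : Set Plane) (f Pf : Plane → Plane) : ℝ :=
  Real.sqrt (∫ x in E, ‖f x - Pf x‖ ^ 2)

/-- `L²(E)` norm of a scalar function. -/
def l2normS (E : Set Plane) (f : Plane → ℝ) : ℝ :=
  Real.sqrt (∫ x in E, (f x) ^ 2)

/-- `L²(E)` norm of an `ℝ²`-valued function. -/
def l2normV (E : Set Plane) (f : Plane → Plane) : ℝ :=
  Real.sqrt (∫ x in E, ‖f x‖ ^ 2)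

/-! ### Auxiliary lemmas -/

section Aux
variable {μ : Measure Plane} {G : Type*} [NormedAddCommGroup G] [InnerProductSpace ℝ G]

lemma aux_integrable_inner {f g : Plane → G} (hf : MemLp f 2 μ) (hg : MemLp g 2 μ) :
    Integrable (fun x => (inner ℝ (f x) (g x) : ℝ)) μ := by
  have h := MeasureTheory.L2.integrable_inner (𝕜 := ℝ) (hf.toLp f) (hg.toLp g)
  refine h.congr ?_
  filter_upwards [hf.coeFn_toLp, hg.coeFn_toLp] with x h1 h2
  rw [h1, h2]

lemma aux_norm_toLp {f : Plane → G} (hf : MemLp f 2 μ) :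
    ‖hf.toLp f‖ = Real.sqrt (∫ x, ‖f x‖ ^ 2 ∂μ) := by
  have h1 : ‖hf.toLp f‖ ^ 2 = ∫ x, ‖f x‖ ^ 2 ∂μ := by
    rw [← real_inner_self_eq_norm_sq, L2.inner_def]
    refine integral_congr_ae ?_
    filter_upwards [hf.coeFn_toLp] with x hx
    rw [hx, real_inner_self_eq_norm_sq]
  rw [← h1, Real.sqrt_sq (norm_nonneg _)]

lemma aux_cs {f g : Plane → G} (hf : MemLp f 2 μ) (hg : MemLp g 2 μ) :
    ∫ x, (inner ℝ (f x) (g x) : ℝ) ∂μ ≤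
      Real.sqrt (∫ x, ‖f x‖ ^ 2 ∂μ) * Real.sqrt (∫ x, ‖g x‖ ^ 2 ∂μ) := by
  have h1 : ∫ x, (inner ℝ (f x) (g x) : ℝ) ∂μ = ⟪hf.toLp f, hg.toLp g⟫ := by
    rw [L2.inner_def]
    refine integral_congr_ae ?_
    filter_upwards [hf.coeFn_toLp, hg.coeFn_toLp] with x h1 h2
    rw [h1, h2]
  rw [h1, ← aux_norm_toLp hf, ← aux_norm_toLp hg]
  exact real_inner_le_norm _ _

lemma aux_integrable_mul {f g : Plane → ℝ} (hf : MemLp f 2 μ) (hg : MemLp g 2 μ) :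
    Integrable (fun x => f x * g x) μ := by
  have h := aux_integrable_inner hf hg
  simpa [RCLike.inner_apply, mul_comm] using h

lemma aux_poly_continuous {m : ℕ} {f : Plane → ℝ} (hf : IsPolyDeg m f) : Continuous f := by
  obtain ⟨P, -, hP⟩ := hf
  have h1 : Continuous fun x : Plane => (fun i => x i : Fin 2 → ℝ) :=
    continuous_pi fun i => PiLp.continuous_apply 2 _ i
  have h2 : Continuous fun x : Plane => MvPolynomial.eval (fun i => x i) P :=
    (MvPolynomial.continuous_eval (p := P)).comp h1
  exact h2.congr fun x => (hP x).symm

lemma aux_contV {f : Plane → Plane} (h : ∀ i, Continuous fun x => f x i) : Continuous f := by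
  have h1 : Continuous fun x : Plane => ((fun i => f x i) : Fin 2 → ℝ) := continuous_pi h
  exact ((PiLp.continuousLinearEquiv 2 ℝ (fun _ : Fin 2 => ℝ)).symm.continuous).comp h1

lemma aux_grad_cont {f : Plane → ℝ} (hf : ContDiff ℝ 1 f) : Continuous (gradient f) :=
  ((InnerProductSpace.toDual ℝ Plane).symm.continuous).comp (hf.continuous_fderiv one_ne_zero)

lemma aux_mem2 {G : Type*} [NormedAddCommGroup G] {E : Set Plane}
    (hEbdd : Bornology.IsBounded E) (hmE : MeasurableSet E)
    [IsFiniteMeasure (volume.restrict E)]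
    {f : Plane → G} (hf : Continuous f) : MemLp f 2 (volume.restrict E) := by
  obtain ⟨C, hC⟩ := (hEbdd.isCompact_closure).exists_bound_of_continuousOn hf.continuousOn
  refine MemLp.of_bound hf.aestronglyMeasurable C ?_
  filter_upwards [ae_restrict_mem hmE] with x hx
  exact hC x (subset_closure hx)

lemma aux_comp {f : Plane → Plane} (hf : MemLp f 2 μ) (i : Fin 2) :
    MemLp (fun x => f x i) 2 μ := by
  have := (EuclideanSpace.proj (𝕜 := ℝ) i).comp_memLp' hf
  exact this

end Aux

/-- estimate (5.9) of the paper, diffusion part: for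
`a(p,q) = ∫_E κ ∇p·∇q` and `a^Π(p,q) = ∫_E κ (Π⁰_{k−1}∇p)·(Π⁰_{k−1}∇q)`,
`a^Π(p,q) − a(p,q) ≤ ℰ_{k−1}(κ∇p)ℰ_{k−1}(∇q) + ℰ_{k−1}(κ∇q)ℰ_{k−1}(∇p)
  + κmax ℰ_{k−1}(∇p)ℰ_{k−1}(∇q)`. -/
theorem statement4
    (E : Set Plane) (hEopen : IsOpen E) (hEbdd : Bornology.IsBounded E)
    (hEpos : 0 < volume E)
    (κ : Plane → ℝ) (κmax : ℝ) (hκmeas : Measurable κ)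
    (hκbdd : ∀ᵐ x ∂(volume.restrict E), |κ x| ≤ κmax)
    (k : ℕ) (hk : 1 ≤ k)
    (p q : Plane → ℝ) (hp : ContDiff ℝ 1 p) (hq : ContDiff ℝ 1 q)
    (Pgp Pgq Pκgp Pκgq : Plane → Plane)
    (hPgp : IsL2ProjV E (k - 1) (gradient p) Pgp)
    (hPgq : IsL2ProjV E (k - 1) (gradient q) Pgq)
    (hPκgp : IsL2ProjV E (k - 1) (fun x => κ x • gradient p x) Pκgp)
    (hPκgq : IsL2ProjV E (k - 1) (fun x => κ x • gradient q x) Pκgq) :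
    (∫ x in E, κ x * ⟪Pgp x, Pgq x⟫) - (∫ x in E, κ x * ⟪gradient p x, gradient q x⟫) ≤
      errV E (fun x => κ x • gradient p x) Pκgp * errV E (gradient q) Pgq
        + errV E (fun x => κ x • gradient q x) Pκgq * errV E (gradient p) Pgp
        + κmax * errV E (gradient p) Pgp * errV E (gradient q) Pgq := by
  haveI : IsFiniteMeasure (volume.restrict E) :=
    ⟨by rw [Measure.restrict_apply_univ]; exact hEbdd.measure_lt_top⟩
  have hmE : MeasurableSet E := hEopen.measurableSet
  have hκ0 : 0 ≤ κmax := by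
    have hμne : volume.restrict E ≠ 0 := by
      rw [Ne, Measure.restrict_eq_zero]; exact hEpos.ne'
    haveI : (ae (volume.restrict E)).NeBot := ae_neBot.mpr hμne
    obtain ⟨x, hx⟩ := hκbdd.exists
    exact (abs_nonneg _).trans hx
  -- continuity facts
  have hAc : Continuous (gradient p) := aux_grad_cont hp
  have hBc : Continuous (gradient q) := aux_grad_cont hq
  have hA'c : Continuous Pgp := aux_contV fun i => aux_poly_continuous (hPgp i).1
  have hB'c : Continuous Pgq := aux_contV fun i => aux_poly_continuous (hPgq i).1
  have hK'c : Continuous Pκgp := aux_contV fun i => aux_poly_continuous (hPκgp i).1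
  have hL'c : Continuous Pκgq := aux_contV fun i => aux_poly_continuous (hPκgq i).1
  -- membership in L²
  have hA : MemLp (gradient p) 2 (volume.restrict E) := aux_mem2 hEbdd hmE hAc
  have hB : MemLp (gradient q) 2 (volume.restrict E) := aux_mem2 hEbdd hmE hBc
  have hA' : MemLp Pgp 2 (volume.restrict E) := aux_mem2 hEbdd hmE hA'c
  have hB' : MemLp Pgq 2 (volume.restrict E) := aux_mem2 hEbdd hmE hB'c
  have hK' : MemLp Pκgp 2 (volume.restrict E) := aux_mem2 hEbdd hmE hK'c
  have hL' : MemLp Pκgq 2 (volume.restrict E) := aux_mem2 hEbdd hmE hL'c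
  have hκsmul : ∀ w : Plane → Plane, Continuous w →
      MemLp (fun x => κ x • w x) 2 (volume.restrict E) := by
    intro w hw
    obtain ⟨C, hC⟩ := (hEbdd.isCompact_closure).exists_bound_of_continuousOn hw.continuousOn
    refine MemLp.of_bound (hκmeas.aestronglyMeasurable.smul hw.aestronglyMeasurable)
      (κmax * C) ?_
    filter_upwards [hκbdd, ae_restrict_mem hmE] with x h1 h2
    rw [norm_smul, Real.norm_eq_abs]
    exact mul_le_mul h1 (hC x (subset_closure h2)) (norm_nonneg _) hκ0
  set u : Plane → Plane := fun x => Pgp x - gradient p x with hu_def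
  set v : Plane → Plane := fun x => Pgq x - gradient q x with hv_def
  have huc : Continuous u := hA'c.sub hAc
  have hvc : Continuous v := hB'c.sub hBc
  have hu : MemLp u 2 (volume.restrict E) := hA'.sub hA
  have hv : MemLp v 2 (volume.restrict E) := hB'.sub hB
  have hκA : MemLp (fun x => κ x • gradient p x) 2 (volume.restrict E) := hκsmul _ hAc
  have hκB : MemLp (fun x => κ x • gradient q x) 2 (volume.restrict E) := hκsmul _ hBc
  have hκu : MemLp (fun x => κ x • u x) 2 (volume.restrict E) := hκsmul u huc
  have hKu : MemLp (fun x => κ x • gradient p x - Pκgp x) 2 (volume.restrict E) := hκA.sub hK'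
  have hLv : MemLp (fun x => κ x • gradient q x - Pκgq x) 2 (volume.restrict E) := hκB.sub hL'
  -- error norms
  have e1 : Real.sqrt (∫ x in E, ‖u x‖ ^ 2) = errV E (gradient p) Pgp := by
    rw [errV]
    congr 1
    refine integral_congr_ae (Filter.Eventually.of_forall fun x => ?_)
    simp only [hu_def]
    rw [norm_sub_rev]
  have e2 : Real.sqrt (∫ x in E, ‖v x‖ ^ 2) = errV E (gradient q) Pgq := by
    rw [errV]
    congr 1
    refine integral_congr_ae (Filter.Eventually.of_forall fun x => ?_)
    simp only [hv_def]
    rw [norm_sub_rev]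
  -- orthogonality
  have horth : ∀ (f Pf P' : Plane → Plane),
      (∀ i : Fin 2, ∫ x in E, (f x i - Pf x i) * P' x i = 0) →
      MemLp (fun x => Pf x - f x) 2 (volume.restrict E) →
      MemLp P' 2 (volume.restrict E) →
      ∫ x in E, ⟪Pf x - f x, P' x⟫ = 0 := by
    intro f Pf P' hzero hdiff hP'
    have hcomp : ∀ i : Fin 2,
        Integrable (fun x => (Pf x i - f x i) * P' x i) (volume.restrict E) := by
      intro i
      have h1 := aux_comp hdiff i
      have h2 := aux_comp hP' i
      have h1' : MemLp (fun x => Pf x i - f x i) 2 (volume.restrict E) := by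
        refine h1.congr_norm ?_ ?_
        · exact ((h1.aestronglyMeasurable))
        · exact Filter.Eventually.of_forall fun x => rfl
      exact aux_integrable_mul h1' h2
    have hsum : ∫ x in E, ⟪Pf x - f x, P' x⟫
        = ∑ i : Fin 2, ∫ x in E, (Pf x i - f x i) * P' x i := by
      rw [← integral_finset_sum _ fun i _ => hcomp i]
      refine integral_congr_ae (Filter.Eventually.of_forall fun x => ?_)
      simp [PiLp.inner_apply, RCLike.inner_apply]
      ring
    rw [hsum]
    refine Finset.sum_eq_zero fun i _ => ?_
    have hneg : ∫ x in E, (Pf x i - f x i) * P' x i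
        = - ∫ x in E, (f x i - Pf x i) * P' x i := by
      rw [← integral_neg]
      refine integral_congr_ae (Filter.Eventually.of_forall fun x => ?_)
      ring
    rw [hneg, hzero i, neg_zero]
  have horth1 : ∫ x in E, ⟪u x, Pκgq x⟫ = 0 :=
    horth (gradient p) Pgp Pκgq (fun i => (hPgp i).2 _ (hPκgq i).1) hu hL'
  have horth2 : ∫ x in E, ⟪v x, Pκgp x⟫ = 0 :=
    horth (gradient q) Pgq Pκgp (fun i => (hPgq i).2 _ (hPκgp i).1) hv hK'
  have horth2' : ∫ x in E, ⟪Pκgp x, v x⟫ = 0 := by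
    rw [← horth2]
    exact integral_congr_ae (Filter.Eventually.of_forall fun x => real_inner_comm _ _)
  -- integrability of the various inner products
  have h01 : Integrable (fun x => κ x * ⟪Pgp x, Pgq x⟫) (volume.restrict E) := by
    refine (aux_integrable_inner (hκsmul Pgp hA'c) hB').congr
      (Filter.Eventually.of_forall fun x => ?_)
    simp only [real_inner_smul_left]
  have h02 : Integrable (fun x => κ x * ⟪gradient p x, gradient q x⟫) (volume.restrict E) := by
    refine (aux_integrable_inner hκA hB).congr (Filter.Eventually.of_forall fun x => ?_)
    simp only [real_inner_smul_left]
  have hint1 : Integrable (fun x => ⟪κ x • u x, v x⟫) (volume.restrict E) :=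
    aux_integrable_inner hκu hv
  have hint2 : Integrable (fun x => ⟪u x, κ x • gradient q x⟫) (volume.restrict E) :=
    aux_integrable_inner hu hκB
  have hint3 : Integrable (fun x => ⟪κ x • gradient p x, v x⟫) (volume.restrict E) :=
    aux_integrable_inner hκA hv
  have hint23 : Integrable (fun x => ⟪u x, κ x • gradient q x⟫
      + ⟪κ x • gradient p x, v x⟫) (volume.restrict E) := hint2.add hint3
  -- the algebraic decomposition
  have key : (∫ x in E, κ x * ⟪Pgp x, Pgq x⟫)
        - (∫ x in E, κ x * ⟪gradient p x, gradient q x⟫)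
      = (∫ x in E, ⟪κ x • u x, v x⟫) + ((∫ x in E, ⟪u x, κ x • gradient q x⟫)
        + (∫ x in E, ⟪κ x • gradient p x, v x⟫)) := by
    rw [← integral_add hint2 hint3, ← integral_add hint1 hint23,
      ← integral_sub h01 h02]
    refine integral_congr_ae (Filter.Eventually.of_forall fun x => ?_)
    simp only [hu_def, hv_def, inner_sub_left, inner_sub_right, real_inner_smul_left,
      real_inner_smul_right]
    ring
  -- replace by projection errors using orthogonality
  have heq2 : ∫ x in E, ⟪u x, κ x • gradient q x⟫
      = ∫ x in E, ⟪u x, κ x • gradient q x - Pκgq x⟫ := by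
    rw [← sub_zero (∫ x in E, ⟪u x, κ x • gradient q x⟫), ← horth1,
      ← integral_sub hint2 (aux_integrable_inner hu hL')]
    refine integral_congr_ae (Filter.Eventually.of_forall fun x => ?_)
    simp only [inner_sub_right]
  have heq3 : ∫ x in E, ⟪κ x • gradient p x, v x⟫
      = ∫ x in E, ⟪κ x • gradient p x - Pκgp x, v x⟫ := by
    rw [← sub_zero (∫ x in E, ⟪κ x • gradient p x, v x⟫), ← horth2',
      ← integral_sub hint3 (aux_integrable_inner hK' hv)]
    refine integral_congr_ae (Filter.Eventually.of_forall fun x => ?_)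
    simp only [inner_sub_left]
  -- Cauchy–Schwarz bounds
  have hbound2 : ∫ x in E, ⟪u x, κ x • gradient q x - Pκgq x⟫
      ≤ errV E (gradient p) Pgp * errV E (fun x => κ x • gradient q x) Pκgq := by
    refine (aux_cs hu hLv).trans ?_
    rw [e1]
    exact le_of_eq rfl
  have hbound3 : ∫ x in E, ⟪κ x • gradient p x - Pκgp x, v x⟫
      ≤ errV E (fun x => κ x • gradient p x) Pκgp * errV E (gradient q) Pgq := by
    refine (aux_cs hKu hv).trans ?_
    rw [e2]
    exact le_of_eq rfl
  have hbound1 : ∫ x in E, ⟪κ x • u x, v x⟫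
      ≤ κmax * (errV E (gradient p) Pgp * errV E (gradient q) Pgq) := by
    refine (aux_cs hκu hv).trans ?_
    have hsq : Real.sqrt (∫ x in E, ‖κ x • u x‖ ^ 2)
        ≤ κmax * Real.sqrt (∫ x in E, ‖u x‖ ^ 2) := by
      have hmono : (∫ x in E, ‖κ x • u x‖ ^ 2) ≤ ∫ x in E, κmax ^ 2 * ‖u x‖ ^ 2 := by
        refine integral_mono_ae
          ((memLp_two_iff_integrable_sq_norm hκu.aestronglyMeasurable).mp hκu)
          (((memLp_two_iff_integrable_sq_norm hu.aestronglyMeasurable).mp hu).const_mul _) ?_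
        filter_upwards [hκbdd] with x hx
        rw [norm_smul, mul_pow, Real.norm_eq_abs]
        exact mul_le_mul_of_nonneg_right (pow_le_pow_left₀ (abs_nonneg _) hx 2) (sq_nonneg _)
      calc Real.sqrt (∫ x in E, ‖κ x • u x‖ ^ 2)
          ≤ Real.sqrt (∫ x in E, κmax ^ 2 * ‖u x‖ ^ 2) := Real.sqrt_le_sqrt hmono
        _ = κmax * Real.sqrt (∫ x in E, ‖u x‖ ^ 2) := by
            rw [integral_const_mul, Real.sqrt_mul (sq_nonneg _), Real.sqrt_sq hκ0]
    calc Real.sqrt (∫ x in E, ‖κ x • u x‖ ^ 2) * Real.sqrt (∫ x in E, ‖v x‖ ^ 2)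
        ≤ (κmax * Real.sqrt (∫ x in E, ‖u x‖ ^ 2)) * Real.sqrt (∫ x in E, ‖v x‖ ^ 2) :=
          mul_le_mul_of_nonneg_right hsq (Real.sqrt_nonneg _)
      _ = κmax * (errV E (gradient p) Pgp * errV E (gradient q) Pgq) := by
          rw [e1, e2]; ring
  calc (∫ x in E, κ x * ⟪Pgp x, Pgq x⟫)
        - (∫ x in E, κ x * ⟪gradient p x, gradient q x⟫)
      = (∫ x in E, ⟪κ x • u x, v x⟫) + ((∫ x in E, ⟪u x, κ x • gradient q x - Pκgq x⟫)
        + (∫ x in E, ⟪κ x • gradient p x - Pκgp x, v x⟫)) := by rw [key, heq2, heq3]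
    _ ≤ κmax * (errV E (gradient p) Pgp * errV E (gradient q) Pgq)
        + (errV E (gradient p) Pgp * errV E (fun x => κ x • gradient q x) Pκgq
          + errV E (fun x => κ x • gradient p x) Pκgp * errV E (gradient q) Pgq) :=
      add_le_add hbound1 (add_le_add hbound2 hbound3)
    _ ≤ errV E (fun x => κ x • gradient p x) Pκgp * errV E (gradient q) Pgq
        + errV E (fun x => κ x • gradient q x) Pκgq * errV E (gradient p) Pgp
        + κmax * errV E (gradient p) Pgp * errV E (gradient q) Pgq := by ring_nf; exact le_refl _
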